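/- Let 1 ≤ p ≤ 2 and let X be a normed real vector space satisfying the type-p inequality with constant c > 0. Then for all integers n ≥ 1 and N ≥ 1 and every f : {0,…,N−1} → X with ‖f(j)‖_X ≤ 1 for all j, the vector-valued Monte Carlo method satisfies N^{−n} · Σ_{(t_1,…,t_n) ∈ {0,…,N−1}^n} ‖ S_N f − (1/n) Σ_{l=1}^n f(t_l) ‖_X ≤ 4·c·n^{1/p−1}. -/

import Mathlib

open Finset

set_option linter.unusedSectionVars false

section helpers

variable {X : Type*} [NormedAddCommGroup X] [NormedSpace ℝ X]

lemma sum_comp_apply_eq_zero {n N : ℕ} (l : Fin n) (h : Fin N → X)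
    (h0 : ∑ j, h j = 0) : ∑ t : Fin n → Fin N, h (t l) = 0 := by
  classical
  have e := Fintype.sum_equiv (Equiv.piSplitAt l fun _ => Fin N)
    (fun t : Fin n → Fin N => h (t l)) (fun q => h q.1) (fun t => by simp)
  rw [e, Fintype.sum_prod_type]
  simp only [Finset.sum_const]
  rw [← Finset.smul_sum, h0, smul_zero]

def swapEquiv {n N : ℕ} (ε : Fin n → Bool) :
    ((Fin n → Fin N) × (Fin n → Fin N)) ≃ ((Fin n → Fin N) × (Fin n → Fin N)) where
  toFun q := (fun l => if ε l then q.1 l else q.2 l, fun l => if ε l then q.2 l else q.1 l)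
  invFun q := (fun l => if ε l then q.1 l else q.2 l, fun l => if ε l then q.2 l else q.1 l)
  left_inv q := by
    ext l <;> simp only <;> by_cases h : ε l <;> simp [h]
  right_inv q := by
    ext l <;> simp only <;> by_cases h : ε l <;> simp [h]

lemma claim2 {n N : ℕ} (g : Fin N → X) (ε : Fin n → Bool) :
    ∑ q : (Fin n → Fin N) × (Fin n → Fin N), ‖∑ l, (g (q.1 l) - g (q.2 l))‖
      = ∑ q : (Fin n → Fin N) × (Fin n → Fin N),
          ‖∑ l, (if ε l then g (q.1 l) - g (q.2 l) else -(g (q.1 l) - g (q.2 l)))‖ := by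
  refine (Fintype.sum_equiv (swapEquiv ε)
    (fun q => ‖∑ l, (if ε l then g (q.1 l) - g (q.2 l) else -(g (q.1 l) - g (q.2 l)))‖)
    (fun q => ‖∑ l, (g (q.1 l) - g (q.2 l))‖) ?_).symm
  intro q
  apply congrArg
  refine Finset.sum_congr rfl fun l _ => ?_
  by_cases h : ε l <;> simp [swapEquiv, h]

lemma claim3 {n N : ℕ} (g : Fin N → X) (ε : Fin n → Bool)
    (q : (Fin n → Fin N) × (Fin n → Fin N)) :
    ‖∑ l, (if ε l then g (q.1 l) - g (q.2 l) else -(g (q.1 l) - g (q.2 l)))‖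
      ≤ ‖∑ l, (if ε l then g (q.1 l) else -g (q.1 l))‖
        + ‖∑ l, (if ε l then g (q.2 l) else -g (q.2 l))‖ := by
  have h : ∑ l, (if ε l then g (q.1 l) - g (q.2 l) else -(g (q.1 l) - g (q.2 l)))
      = (∑ l, (if ε l then g (q.1 l) else -g (q.1 l)))
        - ∑ l, (if ε l then g (q.2 l) else -g (q.2 l)) := by
    rw [← Finset.sum_sub_distrib]
    refine Finset.sum_congr rfl fun l _ => ?_
    by_cases h : ε l <;> simp [h]
    abel
  rw [h]
  exact norm_sub_le _ _

lemma claim4 {p c : ℝ} (hp1 : 1 ≤ p) (hc : 0 < c)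
    (htype : ∀ (m : ℕ) (x : Fin m → X),
      ((2 : ℝ) ^ m)⁻¹ *
          ∑ ε : Fin m → Bool, ‖∑ i, (if ε i then x i else -x i)‖ ^ p
        ≤ c ^ p * ∑ i, ‖x i‖ ^ p)
    {n : ℕ} (x : Fin n → X) (hx : ∀ l, ‖x l‖ ≤ 2) :
    ((2 : ℝ) ^ n)⁻¹ * ∑ ε : Fin n → Bool, ‖∑ l, (if ε l then x l else -x l)‖
      ≤ 2 * c * (n : ℝ) ^ (1 / p) := by
  have hp0 : 0 < p := lt_of_lt_of_le one_pos hp1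
  set z : (Fin n → Bool) → ℝ := fun ε => ‖∑ l, (if ε l then x l else -x l)‖ with hz
  set w : (Fin n → Bool) → ℝ := fun _ => ((2 : ℝ) ^ n)⁻¹ with hwdef
  have hw : ∑ ε : Fin n → Bool, w ε = 1 := by
    simp [hwdef, Finset.sum_const, Finset.card_univ, nsmul_eq_mul]
  have jensen := Real.arith_mean_le_rpow_mean Finset.univ w z
    (fun _ _ => by positivity) hw (fun _ _ => norm_nonneg _) hp1
  have h1 : ((2 : ℝ) ^ n)⁻¹ * ∑ ε : Fin n → Bool, z ε = ∑ ε : Fin n → Bool, w ε * z ε := by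
    rw [Finset.mul_sum]
  have h2 : ∑ ε : Fin n → Bool, w ε * z ε ^ p ≤ c ^ p * ((n : ℝ) * 2 ^ p) := by
    rw [← Finset.mul_sum]
    refine le_trans (htype n x) ?_
    have : ∑ i, ‖x i‖ ^ p ≤ (n : ℝ) * 2 ^ p := by
      calc ∑ i, ‖x i‖ ^ p ≤ ∑ _i : Fin n, (2 : ℝ) ^ p :=
            Finset.sum_le_sum fun i _ =>
              Real.rpow_le_rpow (norm_nonneg _) (hx i) hp0.le
        _ = (n : ℝ) * 2 ^ p := by simp [Finset.sum_const, nsmul_eq_mul]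
    exact mul_le_mul_of_nonneg_left this (Real.rpow_nonneg hc.le p)
  have h3 : (∑ ε : Fin n → Bool, w ε * z ε ^ p) ^ (1 / p)
      ≤ (c ^ p * ((n : ℝ) * 2 ^ p)) ^ (1 / p) := by
    refine Real.rpow_le_rpow ?_ h2 (by positivity)
    exact Finset.sum_nonneg fun ε _ => by positivity
  have h4 : (c ^ p * ((n : ℝ) * 2 ^ p)) ^ (1 / p) = 2 * c * (n : ℝ) ^ (1 / p) := by
    rw [Real.mul_rpow (by positivity) (by positivity),
        Real.mul_rpow (by positivity) (by positivity),
        ← Real.rpow_mul hc.le, ← Real.rpow_mul (by norm_num : (0:ℝ) ≤ 2),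
        mul_one_div, div_self hp0.ne', Real.rpow_one, Real.rpow_one]
    ring
  calc ((2 : ℝ) ^ n)⁻¹ * ∑ ε : Fin n → Bool, z ε
      = ∑ ε : Fin n → Bool, w ε * z ε := h1
    _ ≤ (∑ ε : Fin n → Bool, w ε * z ε ^ p) ^ (1 / p) := jensen
    _ ≤ (c ^ p * ((n : ℝ) * 2 ^ p)) ^ (1 / p) := h3
    _ = 2 * c * (n : ℝ) ^ (1 / p) := h4

lemma claim1 {n N : ℕ} (g : Fin N → X) (hg0 : ∑ j, g j = 0) (t : Fin n → Fin N) :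
    ‖∑ l, g (t l)‖
      ≤ ((N : ℝ) ^ n)⁻¹ * ∑ t' : Fin n → Fin N, ‖∑ l, (g (t l) - g (t' l))‖ := by
  classical
  rcases Nat.eq_zero_or_pos N with rfl | hN
  · rcases Nat.eq_zero_or_pos n with rfl | hn
    · simp
    · exact (t ⟨0, hn⟩).elim0
  have hM : (0 : ℝ) < (N : ℝ) ^ n := by positivity
  have key : ∑ t' : Fin n → Fin N, ∑ l, (g (t l) - g (t' l))
      = (N ^ n : ℕ) • ∑ l, g (t l) := by
    have h1 : ∀ t' : Fin n → Fin N,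
        ∑ l, (g (t l) - g (t' l)) = (∑ l, g (t l)) - ∑ l, g (t' l) :=
      fun t' => Finset.sum_sub_distrib _ _
    rw [Finset.sum_congr rfl fun t' _ => h1 t', Finset.sum_sub_distrib]
    have h2 : ∑ t' : Fin n → Fin N, ∑ l, g (t' l) = 0 := by
      rw [Finset.sum_comm]
      exact Finset.sum_eq_zero fun l _ => sum_comp_apply_eq_zero l g hg0
    rw [h2, sub_zero, Finset.sum_const, Finset.card_univ]
    simp
  have hnorm : ‖∑ t' : Fin n → Fin N, ∑ l, (g (t l) - g (t' l))‖
      = ((N : ℝ) ^ n) * ‖∑ l, g (t l)‖ := by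
    rw [key, ← Nat.cast_smul_eq_nsmul ℝ, norm_smul, Real.norm_eq_abs]
    push_cast
    rw [abs_of_pos hM]
  have hle := norm_sum_le Finset.univ
    (fun t' : Fin n → Fin N => ∑ l, (g (t l) - g (t' l)))
  rw [hnorm] at hle
  calc ‖∑ l, g (t l)‖
      = ((N : ℝ) ^ n)⁻¹ * (((N : ℝ) ^ n) * ‖∑ l, g (t l)‖) := by
        field_simp
    _ ≤ ((N : ℝ) ^ n)⁻¹ * ∑ t' : Fin n → Fin N, ‖∑ l, (g (t l) - g (t' l))‖ :=
        mul_le_mul_of_nonneg_left hle (by positivity)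

end helpers

/-- Let `1 ≤ p ≤ 2` and let `X` be a normed real vector space
satisfying the type-`p` inequality with constant `c > 0`. Then for all `n, N ≥ 1`
and every `f : {0,…,N−1} → X` with `‖f j‖ ≤ 1`, the average (over all `n`-tuples
of sample points) error of the vector-valued Monte Carlo method for the mean
`S_N f = (1/N) ∑ j, f j` is at most `4·c·n^(1/p−1)`. -/
theorem mc_vector_upper_type
    (p : ℝ) (hp1 : 1 ≤ p) (hp2 : p ≤ 2)
    (X : Type*) [NormedAddCommGroup X] [NormedSpace ℝ X]
    (c : ℝ) (hc : 0 < c)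
    (htype : ∀ (m : ℕ) (x : Fin m → X),
      ((2 : ℝ) ^ m)⁻¹ *
          ∑ ε : Fin m → Bool, ‖∑ i, (if ε i then x i else -x i)‖ ^ p
        ≤ c ^ p * ∑ i, ‖x i‖ ^ p)
    (n N : ℕ) (hn : 1 ≤ n) (hN : 1 ≤ N)
    (f : Fin N → X) (hf : ∀ j, ‖f j‖ ≤ 1) :
    ((N : ℝ) ^ n)⁻¹ *
        ∑ t : Fin n → Fin N,
          ‖(N : ℝ)⁻¹ • ∑ j, f j - (n : ℝ)⁻¹ • ∑ l, f (t l)‖ ≤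
      4 * c * (n : ℝ) ^ (1 / p - 1) := by
  classical
  have hNpos : (0 : ℝ) < N := by exact_mod_cast hN
  have hnpos : (0 : ℝ) < n := by exact_mod_cast hn
  have hM : (0 : ℝ) < (N : ℝ) ^ n := by positivity
  set m : X := (N : ℝ)⁻¹ • ∑ j, f j with hm
  set g : Fin N → X := fun j => f j - m with hgdef
  -- basic properties of g
  have hg0 : ∑ j, g j = 0 := by
    simp only [hgdef]
    rw [Finset.sum_sub_distrib, Finset.sum_const, Finset.card_univ, Fintype.card_fin,
      ← Nat.cast_smul_eq_nsmul ℝ, hm, smul_smul, mul_inv_cancel₀ hNpos.ne', one_smul,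
      sub_self]
  have hm1 : ‖m‖ ≤ 1 := by
    rw [hm, norm_smul, Real.norm_eq_abs, abs_of_pos (inv_pos.mpr hNpos)]
    have : ‖∑ j, f j‖ ≤ (N : ℝ) := by
      refine le_trans (norm_sum_le _ _) ?_
      calc ∑ j, ‖f j‖ ≤ ∑ _j : Fin N, (1 : ℝ) := Finset.sum_le_sum fun j _ => hf j
        _ = (N : ℝ) := by simp
    calc (N : ℝ)⁻¹ * ‖∑ j, f j‖ ≤ (N : ℝ)⁻¹ * (N : ℝ) :=
          mul_le_mul_of_nonneg_left this (by positivity)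
      _ = 1 := inv_mul_cancel₀ hNpos.ne'
  have hg2 : ∀ j, ‖g j‖ ≤ 2 := fun j => by
    calc ‖f j - m‖ ≤ ‖f j‖ + ‖m‖ := norm_sub_le _ _
      _ ≤ 1 + 1 := add_le_add (hf j) hm1
      _ = 2 := by norm_num
  -- rewrite the error term
  have hrw : ∀ t : Fin n → Fin N,
      ‖(N : ℝ)⁻¹ • ∑ j, f j - (n : ℝ)⁻¹ • ∑ l, f (t l)‖
        = (n : ℝ)⁻¹ * ‖∑ l, g (t l)‖ := by
    intro t
    have key : m - (n : ℝ)⁻¹ • ∑ l, f (t l) = -((n : ℝ)⁻¹ • ∑ l, g (t l)) := by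
      simp only [hgdef]
      rw [Finset.sum_sub_distrib, Finset.sum_const, Finset.card_univ, Fintype.card_fin,
        smul_sub, ← Nat.cast_smul_eq_nsmul ℝ, smul_smul,
        inv_mul_cancel₀ hnpos.ne', one_smul]
      abel
    rw [← hm, key, norm_neg, norm_smul, Real.norm_eq_abs,
      abs_of_pos (inv_pos.mpr hnpos)]
  rw [Finset.sum_congr rfl fun t _ => hrw t, ← Finset.mul_sum, ← mul_assoc,
    mul_comm (((N : ℝ) ^ n)⁻¹) ((n : ℝ)⁻¹), mul_assoc]
  -- key quantities
  set K : ℝ := ∑ t : Fin n → Fin N, ‖∑ l, g (t l)‖ with hK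
  set D : ℝ := ∑ q : (Fin n → Fin N) × (Fin n → Fin N),
      ‖∑ l, (g (q.1 l) - g (q.2 l))‖ with hD
  set Z : (Fin n → Bool) → ℝ := fun ε =>
      ∑ t : Fin n → Fin N, ‖∑ l, (if ε l then g (t l) else -g (t l))‖ with hZ
  -- Step 1: K ≤ M⁻¹ * D
  have step1 : K ≤ ((N : ℝ) ^ n)⁻¹ * D := by
    rw [hK, hD, Fintype.sum_prod_type, Finset.mul_sum]
    exact Finset.sum_le_sum fun t _ => claim1 g hg0 t
  -- Step 2+3: D ≤ 2 * M * ((2^n)⁻¹ * ∑ ε, Z ε)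
  have step3 : ∀ ε : Fin n → Bool,
      ∑ q : (Fin n → Fin N) × (Fin n → Fin N),
        ‖∑ l, (if ε l then g (q.1 l) - g (q.2 l) else -(g (q.1 l) - g (q.2 l)))‖
      ≤ 2 * ((N : ℝ) ^ n) * Z ε := by
    intro ε
    have h1 : ∑ q : (Fin n → Fin N) × (Fin n → Fin N),
        ‖∑ l, (if ε l then g (q.1 l) else -g (q.1 l))‖ = ((N : ℝ) ^ n) * Z ε := by
      rw [Fintype.sum_prod_type, hZ]
      simp only [Finset.sum_const, Finset.card_univ, nsmul_eq_mul]
      rw [← Finset.mul_sum]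
      simp
    have h2 : ∑ q : (Fin n → Fin N) × (Fin n → Fin N),
        ‖∑ l, (if ε l then g (q.2 l) else -g (q.2 l))‖ = ((N : ℝ) ^ n) * Z ε := by
      rw [Fintype.sum_prod_type, Finset.sum_comm, hZ]
      simp only [Finset.sum_const, Finset.card_univ, nsmul_eq_mul]
      rw [← Finset.mul_sum]
      simp
    calc ∑ q : (Fin n → Fin N) × (Fin n → Fin N),
          ‖∑ l, (if ε l then g (q.1 l) - g (q.2 l) else -(g (q.1 l) - g (q.2 l)))‖
        ≤ ∑ q : (Fin n → Fin N) × (Fin n → Fin N),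
            (‖∑ l, (if ε l then g (q.1 l) else -g (q.1 l))‖
              + ‖∑ l, (if ε l then g (q.2 l) else -g (q.2 l))‖) :=
          Finset.sum_le_sum fun q _ => claim3 g ε q
      _ = ((N : ℝ) ^ n) * Z ε + ((N : ℝ) ^ n) * Z ε := by
          rw [Finset.sum_add_distrib, h1, h2]
      _ = 2 * ((N : ℝ) ^ n) * Z ε := by ring
  have step2 : D ≤ 2 * ((N : ℝ) ^ n) * (((2 : ℝ) ^ n)⁻¹ * ∑ ε : Fin n → Bool, Z ε) := by
    have hcard : (Fintype.card (Fin n → Bool) : ℝ) = 2 ^ n := by simp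
    have hDsum : ((2 : ℝ) ^ n) * D
        = ∑ ε : Fin n → Bool, ∑ q : (Fin n → Fin N) × (Fin n → Fin N),
            ‖∑ l, (if ε l then g (q.1 l) - g (q.2 l) else -(g (q.1 l) - g (q.2 l)))‖ := by
      rw [Finset.sum_congr rfl fun ε _ => (claim2 g ε).symm, Finset.sum_const,
        Finset.card_univ, nsmul_eq_mul, hcard]
    have hsum_le : ∑ ε : Fin n → Bool, (∑ q : (Fin n → Fin N) × (Fin n → Fin N),
        ‖∑ l, (if ε l then g (q.1 l) - g (q.2 l) else -(g (q.1 l) - g (q.2 l)))‖)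
        ≤ ∑ ε : Fin n → Bool, 2 * ((N : ℝ) ^ n) * Z ε :=
      Finset.sum_le_sum fun ε _ => step3 ε
    have h2n : (0 : ℝ) < (2 : ℝ) ^ n := by positivity
    rw [← Finset.mul_sum] at hsum_le
    calc D = ((2 : ℝ) ^ n)⁻¹ * (((2 : ℝ) ^ n) * D) := by field_simp
      _ ≤ ((2 : ℝ) ^ n)⁻¹ * (2 * ((N : ℝ) ^ n) * ∑ ε : Fin n → Bool, Z ε) := by
          refine mul_le_mul_of_nonneg_left ?_ (by positivity)
          rw [hDsum]
          exact hsum_le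
      _ = 2 * ((N : ℝ) ^ n) * (((2 : ℝ) ^ n)⁻¹ * ∑ ε : Fin n → Bool, Z ε) := by ring
  -- Step 4: (2^n)⁻¹ * ∑ ε, Z ε ≤ M * (2 c n^(1/p))
  have step4 : ((2 : ℝ) ^ n)⁻¹ * ∑ ε : Fin n → Bool, Z ε
      ≤ ((N : ℝ) ^ n) * (2 * c * (n : ℝ) ^ (1 / p)) := by
    rw [hZ, Finset.sum_comm, Finset.mul_sum]
    calc ∑ t : Fin n → Fin N, (((2 : ℝ) ^ n)⁻¹ *
          ∑ ε : Fin n → Bool, ‖∑ l, (if ε l then g (t l) else -g (t l))‖)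
        ≤ ∑ _t : Fin n → Fin N, (2 * c * (n : ℝ) ^ (1 / p)) :=
          Finset.sum_le_sum fun t _ =>
            claim4 hp1 hc htype (fun l => g (t l)) (fun l => hg2 (t l))
      _ = ((N : ℝ) ^ n) * (2 * c * (n : ℝ) ^ (1 / p)) := by
          simp [Finset.sum_const, Finset.card_univ, nsmul_eq_mul]
  -- combine
  have hKbound : ((N : ℝ) ^ n)⁻¹ * K ≤ 4 * c * (n : ℝ) ^ (1 / p) := by
    have hDb : D ≤ 2 * ((N : ℝ) ^ n) * (((N : ℝ) ^ n) * (2 * c * (n : ℝ) ^ (1 / p))) :=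
      le_trans step2 (mul_le_mul_of_nonneg_left step4 (by positivity))
    have hKb : K ≤ ((N : ℝ) ^ n) * (4 * c * (n : ℝ) ^ (1 / p)) := by
      refine le_trans step1 ?_
      calc ((N : ℝ) ^ n)⁻¹ * D
          ≤ ((N : ℝ) ^ n)⁻¹ *
              (2 * ((N : ℝ) ^ n) * (((N : ℝ) ^ n) * (2 * c * (n : ℝ) ^ (1 / p)))) :=
            mul_le_mul_of_nonneg_left hDb (by positivity)
        _ = ((N : ℝ) ^ n) * (4 * c * (n : ℝ) ^ (1 / p)) := by field_simp; ring
    calc ((N : ℝ) ^ n)⁻¹ * K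
        ≤ ((N : ℝ) ^ n)⁻¹ * (((N : ℝ) ^ n) * (4 * c * (n : ℝ) ^ (1 / p))) :=
          mul_le_mul_of_nonneg_left hKb (by positivity)
      _ = 4 * c * (n : ℝ) ^ (1 / p) := by field_simp
  have hrpow : (n : ℝ) ^ (1 / p - 1) = (n : ℝ)⁻¹ * (n : ℝ) ^ (1 / p) := by
    rw [Real.rpow_sub hnpos, Real.rpow_one, div_eq_inv_mul]
  calc (n : ℝ)⁻¹ * (((N : ℝ) ^ n)⁻¹ * K)
      ≤ (n : ℝ)⁻¹ * (4 * c * (n : ℝ) ^ (1 / p)) :=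
        mul_le_mul_of_nonneg_left hKbound (by positivity)
    _ = 4 * c * (n : ℝ) ^ (1 / p - 1) := by rw [hrpow]; ring
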